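/- Fix real numbers t0 < t1 and 0 ≤ x_min < x_max. Let ψ : [t0,t1] × [x_min,x_max] → ℝ be C³ and satisfy ∂_t ψ(t,x) + ∂_x ψ(t,x) = 0 for all (t,x), with boundary values ψ(t, x_min) = u(t) and ψ(t, x_max) = 0 for all t ∈ [t0,t1], where u is C². Define y(t) = ∫_{x_min}^{x_max} x³ ψ(t,x) dx. Then y is three times differentiable on [t0,t1] and y‴(t) = 6 ∫_{x_min}^{x_max} ψ(t,x) dx + 6 x_min u(t) + 3 x_min² u′(t) + x_min³ u″(t) for all t ∈ [t0,t1]. -/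

import Mathlib

set_option autoImplicit false
set_option maxHeartbeats 1000000

/-- Third derivative identity for the third-moment output of the unit-speed transport
equation `∂ₜψ + ∂ₓψ = 0` with `ψ(t, xmax) = 0`:
`y'''(t) = 6 ∫ ψ(t,x) dx + 6 xmin u(t) + 3 xmin² u'(t) + xmin³ u''(t)`
where `u(t) = ψ(t, xmin)`. -/
theorem stmt7 (t0 t1 xmin xmax : ℝ) (ht : t0 < t1) (hx0 : 0 ≤ xmin) (hx : xmin < xmax)
    (ψ : ℝ → ℝ → ℝ) (u : ℝ → ℝ)
    (hC : ContDiffOn ℝ 3 (fun p : ℝ × ℝ => ψ p.1 p.2) (Set.Icc t0 t1 ×ˢ Set.Icc xmin xmax))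
    (hu : ContDiffOn ℝ 2 u (Set.Icc t0 t1))
    (hPDE : ∀ t ∈ Set.Icc t0 t1, ∀ x ∈ Set.Icc xmin xmax,
      derivWithin (fun s => ψ s x) (Set.Icc t0 t1) t
        + derivWithin (fun ξ => ψ t ξ) (Set.Icc xmin xmax) x = 0)
    (hbmin : ∀ t ∈ Set.Icc t0 t1, ψ t xmin = u t)
    (hbmax : ∀ t ∈ Set.Icc t0 t1, ψ t xmax = 0) :
    ∃ y1 y2 : ℝ → ℝ,
      (∀ t ∈ Set.Icc t0 t1,
        HasDerivWithinAt (fun s => ∫ x in xmin..xmax, x ^ 3 * ψ s x) (y1 t)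
          (Set.Icc t0 t1) t) ∧
      (∀ t ∈ Set.Icc t0 t1, HasDerivWithinAt y1 (y2 t) (Set.Icc t0 t1) t) ∧
      (∀ t ∈ Set.Icc t0 t1,
        HasDerivWithinAt y2
          ((6 * ∫ x in xmin..xmax, ψ t x) + 6 * xmin * u t
            + 3 * xmin ^ 2 * derivWithin u (Set.Icc t0 t1) t
            + xmin ^ 3 * derivWithin (derivWithin u (Set.Icc t0 t1)) (Set.Icc t0 t1) t)
          (Set.Icc t0 t1) t) := by
  classical
  set I := Set.Icc t0 t1 with hIdef
  set J := Set.Icc xmin xmax with hJdef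
  have huI : UniqueDiffOn ℝ I := uniqueDiffOn_Icc ht
  have huJ : UniqueDiffOn ℝ J := uniqueDiffOn_Icc hx
  have hR : UniqueDiffOn ℝ (I ×ˢ J) := huI.prod huJ
  have hψc : ContinuousOn (fun p : ℝ × ℝ => ψ p.1 p.2) (I ×ˢ J) := hC.continuousOn
  set D := fun p : ℝ × ℝ => fderivWithin ℝ (fun p : ℝ × ℝ => ψ p.1 p.2) (I ×ˢ J) p with hDdef
  have hdiffΨ : ∀ p ∈ I ×ˢ J,
      HasFDerivWithinAt (fun p : ℝ × ℝ => ψ p.1 p.2) (D p) (I ×ˢ J) p := by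
    intro p hp
    exact ((hC.differentiableOn (by norm_num)) p hp).hasFDerivWithinAt
  have hDc : ContinuousOn D (I ×ˢ J) := hC.continuousOn_fderivWithin hR (by norm_num)
  -- slice derivatives
  have hslice_t : ∀ t ∈ I, ∀ x ∈ J,
      HasDerivWithinAt (fun s => ψ s x) (D (t, x) (1, 0)) I t := by
    intro t htI x hxJ
    have hL : HasDerivWithinAt (fun s : ℝ => (s, x)) ((1 : ℝ), (0 : ℝ)) I t :=
      ((hasDerivAt_id t).prodMk (hasDerivAt_const t x)).hasDerivWithinAt
    exact (hdiffΨ (t, x) ⟨htI, hxJ⟩).comp_hasDerivWithinAt t hL (fun s hs => (⟨hs, hxJ⟩ : (s, x) ∈ I ×ˢ J))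
  have hslice_x : ∀ t ∈ I, ∀ x ∈ J,
      HasDerivWithinAt (fun ξ => ψ t ξ) (D (t, x) (0, 1)) J x := by
    intro t htI x hxJ
    have hL : HasDerivWithinAt (fun ξ : ℝ => (t, ξ)) ((0 : ℝ), (1 : ℝ)) J x :=
      ((hasDerivAt_const x t).prodMk (hasDerivAt_id x)).hasDerivWithinAt
    exact (hdiffΨ (t, x) ⟨htI, hxJ⟩).comp_hasDerivWithinAt x hL (fun ξ hξ => ⟨htI, hξ⟩)
  -- PDE in terms of D
  have hPDE' : ∀ t ∈ I, ∀ x ∈ J, D (t, x) (1, 0) = -D (t, x) (0, 1) := by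
    intro t htI x hxJ
    have h1 := (hslice_t t htI x hxJ).derivWithin (huI t htI)
    have h2 := (hslice_x t htI x hxJ).derivWithin (huJ x hxJ)
    have h3 := hPDE t htI x hxJ
    rw [h1, h2] at h3
    linarith
  -- global bound on the time partial derivative
  obtain ⟨C0, hC0⟩ := (isCompact_Icc.prod isCompact_Icc).exists_bound_of_continuousOn hDc
  set C := max C0 0 with hCdef
  have hC1 : ∀ p ∈ I ×ˢ J, ‖D p (1, 0)‖ ≤ C := by
    intro p hp
    calc ‖D p (1, 0)‖ ≤ ‖D p‖ * ‖((1 : ℝ), (0 : ℝ))‖ := (D p).le_opNorm _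
      _ ≤ C0 * 1 := by
          apply mul_le_mul (hC0 p hp) _ (norm_nonneg _)
            ((norm_nonneg _).trans (hC0 p hp))
          rw [Prod.norm_def]
          simp
      _ ≤ C := by rw [mul_one]; exact le_max_left _ _
  -- slice continuity
  have hψx : ∀ t ∈ I, ContinuousOn (fun x => ψ t x) J := by
    intro t htI
    exact hψc.comp ((continuous_const.prodMk continuous_id).continuousOn)
      (fun x hxJ => ⟨htI, hxJ⟩)
  have hg1c : ∀ t ∈ I, ContinuousOn (fun x => D (t, x) (1, 0)) J := by
    intro t htI
    exact (hDc.comp ((continuous_const.prodMk continuous_id).continuousOn)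
      (fun x hxJ => ⟨htI, hxJ⟩)).clm_apply continuousOn_const
  have hg2c : ∀ t ∈ I, ContinuousOn (fun x => D (t, x) (0, 1)) J := by
    intro t htI
    exact (hDc.comp ((continuous_const.prodMk continuous_id).continuousOn)
      (fun x hxJ => ⟨htI, hxJ⟩)).clm_apply continuousOn_const
  -- integrability of moments
  have hInt : ∀ (j : ℕ), ∀ t ∈ I, IntervalIntegrable (fun x => x ^ j * ψ t x)
      MeasureTheory.volume xmin xmax := by
    intro j t htI
    apply ContinuousOn.intervalIntegrable
    rw [Set.uIcc_of_le hx.le]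
    exact ((continuous_pow j).continuousOn).mul (hψx t htI)
  -- continuity of moments in t
  have hMcont : ∀ j : ℕ, ContinuousOn (fun t => ∫ x in xmin..xmax, x ^ j * ψ t x) I := by
    intro j
    have hmem : ∀ p : ℝ × ℝ, (max t0 (min p.1 t1), max xmin (min p.2 xmax)) ∈ I ×ˢ J := by
      intro p
      exact ⟨⟨le_max_left _ _, max_le ht.le (min_le_right _ _)⟩,
        ⟨le_max_left _ _, max_le hx.le (min_le_right _ _)⟩⟩
    have hΦ : Continuous (fun p : ℝ × ℝ => ψ (max t0 (min p.1 t1)) (max xmin (min p.2 xmax))) :=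
      hψc.comp_continuous (by fun_prop) hmem
    have hcont : Continuous (fun t : ℝ => ∫ x in xmin..xmax,
        x ^ j * ψ (max t0 (min t t1)) (max xmin (min x xmax))) := by
      apply intervalIntegral.continuous_parametric_intervalIntegral_of_continuous'
      exact (continuous_snd.pow j).mul hΦ
    apply hcont.continuousOn.congr
    intro t htI
    apply intervalIntegral.integral_congr
    intro x hxJ
    rw [Set.uIcc_of_le hx.le] at hxJ
    simp only
    rw [min_eq_left htI.2, max_eq_right htI.1, min_eq_left hxJ.2, max_eq_right hxJ.1]
  -- integration by parts / FTC in x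
  have hII : ∀ (k : ℕ), ∀ t ∈ I, ∫ x in xmin..xmax, x ^ (k + 1) * D (t, x) (0, 1)
      = -(xmin ^ (k + 1) * u t) - ((k : ℝ) + 1) * ∫ x in xmin..xmax, x ^ k * ψ t x := by
    intro k t htI
    have hint1 : IntervalIntegrable (fun x => ((k : ℝ) + 1) * (x ^ k * ψ t x))
        MeasureTheory.volume xmin xmax := (hInt k t htI).const_mul _
    have hint2 : IntervalIntegrable (fun x => x ^ (k + 1) * D (t, x) (0, 1))
        MeasureTheory.volume xmin xmax := by
      apply ContinuousOn.intervalIntegrable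
      rw [Set.uIcc_of_le hx.le]
      exact ((continuous_pow (k + 1)).continuousOn).mul (hg2c t htI)
    have hftc : ∫ x in xmin..xmax,
        (((k : ℝ) + 1) * (x ^ k * ψ t x) + x ^ (k + 1) * D (t, x) (0, 1))
        = xmax ^ (k + 1) * ψ t xmax - xmin ^ (k + 1) * ψ t xmin := by
      apply intervalIntegral.integral_eq_sub_of_hasDeriv_right_of_le hx.le
      · exact ((continuous_pow (k + 1)).continuousOn).mul (hψx t htI)
      · intro x hxO
        have hxJ : x ∈ J := Set.Ioo_subset_Icc_self hxO
        have hd : HasDerivWithinAt (fun x => x ^ (k + 1) * ψ t x)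
            (((k : ℝ) + 1) * (x ^ k * ψ t x) + x ^ (k + 1) * D (t, x) (0, 1)) J x := by
          have h := ((hasDerivAt_pow (k + 1) x).hasDerivWithinAt (s := J)).mul
            (hslice_x t htI x hxJ)
          convert h using 1
          · rfl
          · rfl
          · rfl
          push_cast
          ring
        exact (hd.hasDerivAt (Icc_mem_nhds hxO.1 hxO.2)).hasDerivWithinAt
      · exact hint1.add hint2
    have hsplit : ∫ x in xmin..xmax,
        (((k : ℝ) + 1) * (x ^ k * ψ t x) + x ^ (k + 1) * D (t, x) (0, 1))
        = ((k : ℝ) + 1) * (∫ x in xmin..xmax, x ^ k * ψ t x)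
          + ∫ x in xmin..xmax, x ^ (k + 1) * D (t, x) (0, 1) := by
      rw [intervalIntegral.integral_add hint1 hint2, intervalIntegral.integral_const_mul]
    rw [hsplit, hbmax t htI, hbmin t htI] at hftc
    linarith
  -- interior derivative of the moments
  have hDI : ∀ (k : ℕ), ∀ t ∈ Set.Ioo t0 t1,
      HasDerivAt (fun s => ∫ x in xmin..xmax, x ^ (k + 1) * ψ s x)
        (((k : ℝ) + 1) * (∫ x in xmin..xmax, x ^ k * ψ t x) + xmin ^ (k + 1) * u t) t := by
    intro k t htO
    have htI : t ∈ I := Set.Ioo_subset_Icc_self htO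
    have hε0 : (0 : ℝ) < min (t - t0) (t1 - t) :=
      lt_min (by linarith [htO.1]) (by linarith [htO.2])
    have hball : Metric.ball t (min (t - t0) (t1 - t)) ⊆ Set.Ioo t0 t1 := by
      intro s hs
      rw [Metric.mem_ball, Real.dist_eq, abs_lt] at hs
      have h1 := min_le_left (t - t0) (t1 - t)
      have h2 := min_le_right (t - t0) (t1 - t)
      exact ⟨by linarith [hs.1], by linarith [hs.2]⟩
    have key := intervalIntegral.hasDerivAt_integral_of_dominated_loc_of_deriv_le
      (μ := MeasureTheory.volume) (a := xmin) (b := xmax)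
      (F := fun s x => x ^ (k + 1) * ψ s x) (F' := fun s x => x ^ (k + 1) * D (s, x) (1, 0))
      (x₀ := t) (bound := fun _ => xmax ^ (k + 1) * C) (Metric.ball_mem_nhds t hε0) ?_ (hInt (k + 1) t htI) ?_ ?_
      intervalIntegrable_const ?_
    · have hrw : (∫ x in xmin..xmax, x ^ (k + 1) * D (t, x) (1, 0))
          = ((k : ℝ) + 1) * (∫ x in xmin..xmax, x ^ k * ψ t x) + xmin ^ (k + 1) * u t := by
        have hcg : (∫ x in xmin..xmax, x ^ (k + 1) * D (t, x) (1, 0))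
            = ∫ x in xmin..xmax, -(x ^ (k + 1) * D (t, x) (0, 1)) := by
          apply intervalIntegral.integral_congr
          intro x hxJ
          rw [Set.uIcc_of_le hx.le] at hxJ
          simp only
          rw [hPDE' t htI x hxJ]
          ring
        rw [hcg, intervalIntegral.integral_neg, hII k t htI]
        ring
      have hkey := key.2
      rwa [hrw] at hkey
    · -- measurability of F s near t
      filter_upwards [Ioo_mem_nhds htO.1 htO.2] with s hs
      rw [Set.uIoc_of_le hx.le]
      exact ((((continuous_pow (k + 1)).continuousOn).mul
        (hψx s (Set.Ioo_subset_Icc_self hs))).mono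
        Set.Ioc_subset_Icc_self).aestronglyMeasurable measurableSet_Ioc
    · -- measurability of F' t
      rw [Set.uIoc_of_le hx.le]
      exact ((((continuous_pow (k + 1)).continuousOn).mul (hg1c t htI)).mono
        Set.Ioc_subset_Icc_self).aestronglyMeasurable measurableSet_Ioc
    · -- bound
      refine Filter.Eventually.of_forall fun x hxI s hsB => ?_
      rw [Set.uIoc_of_le hx.le] at hxI
      have hxJ : x ∈ J := Set.Ioc_subset_Icc_self hxI
      have hsI : s ∈ I := Set.Ioo_subset_Icc_self (hball hsB)
      have hx0' : (0 : ℝ) ≤ x := hx0.trans hxJ.1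
      calc ‖x ^ (k + 1) * D (s, x) (1, 0)‖ = |x| ^ (k + 1) * ‖D (s, x) (1, 0)‖ := by
            rw [norm_mul, norm_pow]; rfl
        _ ≤ xmax ^ (k + 1) * C := by
            apply mul_le_mul _ (hC1 (s, x) ⟨hsI, hxJ⟩) (norm_nonneg _)
              (pow_nonneg (hx0.trans hx.le) _)
            rw [abs_of_nonneg hx0']
            exact pow_le_pow_left₀ hx0' hxJ.2 _
    · -- differentiability in s
      refine Filter.Eventually.of_forall fun x hxI s hsB => ?_
      rw [Set.uIoc_of_le hx.le] at hxI
      have hxJ : x ∈ J := Set.Ioc_subset_Icc_self hxI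
      have hsO : s ∈ Set.Ioo t0 t1 := hball hsB
      have hsI : s ∈ I := Set.Ioo_subset_Icc_self hsO
      exact ((hslice_t s hsI x hxJ).hasDerivAt (Icc_mem_nhds hsO.1 hsO.2)).const_mul _
  -- the within-derivative of the moments, on all of I
  have keyD : ∀ (k : ℕ), ∀ t ∈ I,
      HasDerivWithinAt (fun s => ∫ x in xmin..xmax, x ^ (k + 1) * ψ s x)
        (((k : ℝ) + 1) * (∫ x in xmin..xmax, x ^ k * ψ t x) + xmin ^ (k + 1) * u t) I t := by
    intro k t htI
    set F := fun s => ∫ x in xmin..xmax, x ^ (k + 1) * ψ s x with hFdef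
    set g := fun t => ((k : ℝ) + 1) * (∫ x in xmin..xmax, x ^ k * ψ t x) + xmin ^ (k + 1) * u t
      with hgdef
    have hgc : ContinuousOn g I :=
      (continuousOn_const.mul (hMcont k)).add (continuousOn_const.mul hu.continuousOn)
    have hFd : DifferentiableOn ℝ F (Set.Ioo t0 t1) := fun s hs =>
      (hDI k s hs).differentiableAt.differentiableWithinAt
    have hder : ∀ s ∈ Set.Ioo t0 t1, deriv F s = g s := fun s hs => (hDI k s hs).deriv
    rcases eq_or_lt_of_le htI.1 with h0 | h0
    · -- t = t0
      subst h0
      have hlim : Filter.Tendsto (deriv F) (nhdsWithin t0 (Set.Ioi t0)) (nhds (g t0)) := by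
        rw [← nhdsWithin_Ioo_eq_nhdsGT ht]
        have hcwg : Filter.Tendsto g (nhdsWithin t0 (Set.Ioo t0 t1)) (nhds (g t0)) :=
          (hgc.continuousWithinAt htI).mono Set.Ioo_subset_Icc_self
        exact Filter.Tendsto.congr'
          (Filter.eventuallyEq_of_mem self_mem_nhdsWithin fun s hs => (hder s hs).symm) hcwg
      have hE : HasDerivWithinAt F (g t0) (Set.Ici t0) t0 :=
        hasDerivWithinAt_Ici_of_tendsto_deriv hFd
          (((hMcont (k + 1)).continuousWithinAt htI).mono Set.Ioo_subset_Icc_self)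
          (Ioo_mem_nhdsGT ht) hlim
      exact hE.mono Set.Icc_subset_Ici_self
    rcases eq_or_lt_of_le htI.2 with h1 | h1
    · -- t = t1
      subst h1
      have hlim : Filter.Tendsto (deriv F) (nhdsWithin t (Set.Iio t)) (nhds (g t)) := by
        rw [← nhdsWithin_Ioo_eq_nhdsLT h0]
        have hcwg : Filter.Tendsto g (nhdsWithin t (Set.Ioo t0 t)) (nhds (g t)) :=
          (hgc.continuousWithinAt htI).mono Set.Ioo_subset_Icc_self
        exact Filter.Tendsto.congr'
          (Filter.eventuallyEq_of_mem self_mem_nhdsWithin fun s hs => (hder s hs).symm) hcwg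
      have hE : HasDerivWithinAt F (g t) (Set.Iic t) t :=
        hasDerivWithinAt_Iic_of_tendsto_deriv hFd
          (((hMcont (k + 1)).continuousWithinAt htI).mono Set.Ioo_subset_Icc_self)
          (Ioo_mem_nhdsLT h0) hlim
      exact hE.mono Set.Icc_subset_Iic_self
    · exact (hDI k t ⟨h0, h1⟩).hasDerivWithinAt
  -- derivatives of u
  have hu1 : ∀ t ∈ I, HasDerivWithinAt u (derivWithin u I t) I t := fun t htI =>
    ((hu.differentiableOn (by norm_num)) t htI).hasDerivWithinAt
  have hu2 : ∀ t ∈ I, HasDerivWithinAt (derivWithin u I)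
      (derivWithin (derivWithin u I) I t) I t := fun t htI =>
    (((hu.derivWithin huI (m := 1) (by norm_num)).differentiableOn (by norm_num)) t
      htI).hasDerivWithinAt
  -- assemble
  refine ⟨fun t => 3 * (∫ x in xmin..xmax, x ^ 2 * ψ t x) + xmin ^ 3 * u t,
    fun t => 6 * (∫ x in xmin..xmax, x ^ 1 * ψ t x) + 3 * xmin ^ 2 * u t
      + xmin ^ 3 * derivWithin u I t, ?_, ?_, ?_⟩
  · intro t htI
    have h := keyD 2 t htI
    convert h using 1
    push_cast
    ring
  · intro t htI
    have h := ((keyD 1 t htI).const_mul (3 : ℝ)).add ((hu1 t htI).const_mul (xmin ^ 3))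
    convert h using 1
    · rfl
    · rfl
    · rfl
    push_cast
    ring
  · intro t htI
    have h := (((keyD 0 t htI).const_mul (6 : ℝ)).add
      ((hu1 t htI).const_mul (3 * xmin ^ 2))).add ((hu2 t htI).const_mul (xmin ^ 3))
    simp only [pow_zero, one_mul, zero_add, pow_one, Nat.cast_zero] at h
    convert h using 1
    · rfl
    · rfl
    · funext s
      norm_num
    · ring
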